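/- Let Q ⊆ ℤ^d be a finite set and D = Q − Q. Then ν(D) := sup{ δ̄(A) : A ⊆ ℤ^d, (A−A) ∩ D = ∅ } ≤ 1/|Q|, with equality if Q tiles ℤ^d (i.e., there exists S ⊆ ℤ^d with ℤ^d = ⊔_{r∈S} (Q + r)). -/

import Mathlib

open Filter

noncomputable def upperDensity {d : ℕ} (A : Set (Fin d → ℤ)) : ℝ :=
  limsup (fun r : ℕ =>
    (Nat.card ↥(A ∩ {x : Fin d → ℤ | ∀ i, -(r : ℤ) ≤ x i ∧ x i < (r : ℤ)}) : ℝ)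
      / (2 * r) ^ d) atTop

namespace Stmt17Aux

/-- The box `[-r, r)^d` as a Finset. -/
noncomputable def boxF (d r : ℕ) : Finset (Fin d → ℤ) :=
  Fintype.piFinset fun _ => Finset.Ico (-(r : ℤ)) (r : ℤ)

lemma mem_boxF {d r : ℕ} {x : Fin d → ℤ} :
    x ∈ boxF d r ↔ ∀ i, -(r : ℤ) ≤ x i ∧ x i < r := by
  simp [boxF, Fintype.mem_piFinset, Finset.mem_Ico]

lemma card_boxF (d r : ℕ) : (boxF d r).card = (2 * r) ^ d := by
  simp only [boxF, Fintype.card_piFinset, Int.card_Ico, Finset.prod_const,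
    Finset.card_univ, Fintype.card_fin]
  congr 1
  omega

lemma count_eq (d r : ℕ) (A : Set (Fin d → ℤ)) [DecidablePred (· ∈ A)] :
    Nat.card ↥(A ∩ {x : Fin d → ℤ | ∀ i, -(r : ℤ) ≤ x i ∧ x i < (r : ℤ)})
      = ((boxF d r).filter (· ∈ A)).card := by
  have hset : A ∩ {x : Fin d → ℤ | ∀ i, -(r : ℤ) ≤ x i ∧ x i < (r : ℤ)}
      = ↑((boxF d r).filter (· ∈ A)) := by
    ext x
    simp [mem_boxF, and_comm]
  rw [Nat.card_coe_set_eq, hset, Set.ncard_coe_finset]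

/-- Upper counting bound for an avoiding set. -/
lemma count_upper {d : ℕ} (Q : Finset (Fin d → ℤ)) (M : ℕ)
    (hM : ∀ q ∈ Q, ∀ i, -(M : ℤ) ≤ q i ∧ q i ≤ M)
    (A : Set (Fin d → ℤ))
    (hA : ∀ a ∈ A, ∀ b ∈ A, ∀ q ∈ Q, ∀ q' ∈ Q, q ≠ q' → a - b ≠ q - q')
    (r : ℕ) :
    Q.card * Nat.card ↥(A ∩ {x : Fin d → ℤ | ∀ i, -(r : ℤ) ≤ x i ∧ x i < (r : ℤ)})
      ≤ (2 * (r + M)) ^ d := by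
  classical
  rw [count_eq]
  rw [← card_boxF d (r + M)]
  rw [mul_comm, ← Finset.card_product]
  apply Finset.card_le_card_of_injOn (fun p => p.1 + p.2)
  · rintro ⟨a, q⟩ hp
    simp only [Finset.mem_coe, Finset.mem_product, Finset.mem_filter, mem_boxF] at hp
    obtain ⟨⟨hbox, _⟩, hq⟩ := hp
    simp only [Finset.mem_coe, mem_boxF, Pi.add_apply]
    intro i
    have h1 := hbox i
    have h2 := hM q hq i
    push_cast
    omega
  · rintro ⟨a, q⟩ hp ⟨b, q'⟩ hp' heq
    simp only [Finset.coe_product, Set.mem_prod, Finset.coe_filter, Set.mem_setOf_eq,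
      Finset.mem_coe] at hp hp'
    obtain ⟨⟨_, haA⟩, hq⟩ := hp
    obtain ⟨⟨_, hbA⟩, hq'⟩ := hp'
    simp only at heq
    by_cases hqq : q = q'
    · subst hqq
      have : a = b := by
        have := heq
        exact add_right_cancel this
      simp [this]
    · exfalso
      apply hA a haA b hbA q' hq' q hq (fun h => hqq h.symm)
      have : a - b = q' - q := by
        rw [sub_eq_sub_iff_add_eq_add]
        rw [heq]; abel
      exact this

/-- Lower counting bound from a tiling. -/
lemma count_lower {d : ℕ} (Q : Finset (Fin d → ℤ)) (M : ℕ)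
    (hM : ∀ q ∈ Q, ∀ i, -(M : ℤ) ≤ q i ∧ q i ≤ M)
    (S : Set (Fin d → ℤ))
    (hS : ∀ x : Fin d → ℤ,
      ∃! p : (Fin d → ℤ) × (Fin d → ℤ), p.1 ∈ Q ∧ p.2 ∈ S ∧ x = p.1 + p.2)
    (r : ℕ) :
    (2 * r) ^ d ≤
      Q.card * Nat.card ↥(S ∩
        {x : Fin d → ℤ | ∀ i, -((r + M : ℕ) : ℤ) ≤ x i ∧ x i < ((r + M : ℕ) : ℤ)}) := by
  classical
  rw [count_eq]
  rw [← card_boxF d r, ← Finset.card_product]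
  set t := (boxF d (r + M)).filter (· ∈ S) with ht
  refine Finset.card_le_card_of_injOn (fun x => (hS x).choose) ?_ ?_
  · intro x hx
    rw [Finset.mem_coe, mem_boxF] at hx
    have hp := (hS x).choose_spec.1
    show (hS x).choose ∈ Q ×ˢ t
    set p := (hS x).choose with hpdef
    clear_value p
    obtain ⟨hq, hs, hxeq⟩ := hp
    rw [Finset.mem_product]
    refine ⟨hq, ?_⟩
    rw [ht, Finset.mem_filter, mem_boxF]
    refine ⟨fun i => ?_, hs⟩
    have h1 := hx i
    have h2 := hM p.1 hq i
    have h4 : x i = p.1 i + p.2 i := by rw [hxeq]; rfl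
    push_cast
    omega
  · intro x _ y _ heq
    obtain ⟨_, _, hxeq⟩ := (hS x).choose_spec.1
    obtain ⟨_, _, hyeq⟩ := (hS y).choose_spec.1
    simp only at heq
    rw [hxeq, hyeq, heq]

/-- The auxiliary convergence lemma. -/
lemma tendAux (d a b : ℕ) (n : ℝ) (hn : 0 < n) :
    Tendsto (fun r : ℕ => (2 * ((r : ℝ) + a)) ^ d / (n * (2 * ((r : ℝ) + b)) ^ d))
      atTop (nhds (1 / n)) := by
  have hnum : Tendsto (fun r : ℕ => (1 + (a : ℝ) / r) ^ d) atTop (nhds 1) := by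
    have := (tendsto_const_nhds (x := (1 : ℝ)) (f := atTop (α := ℕ))).add
      (tendsto_const_div_atTop_nhds_zero_nat (a : ℝ))
    simpa using this.pow d
  have hden : Tendsto (fun r : ℕ => n * (1 + (b : ℝ) / r) ^ d) atTop (nhds n) := by
    have := (tendsto_const_nhds (x := (1 : ℝ)) (f := atTop (α := ℕ))).add
      (tendsto_const_div_atTop_nhds_zero_nat (b : ℝ))
    simpa using (tendsto_const_nhds (x := n)).mul (this.pow d)
  have h := hnum.div hden hn.ne'
  apply h.congr'
  filter_upwards [eventually_ge_atTop 1] with r hr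
  have hr0 : (r : ℝ) ≠ 0 := by positivity
  have hrp : (0 : ℝ) < r := by positivity
  have e1 : (2 * ((r : ℝ) + a)) = (2 * r) * (1 + (a : ℝ) / r) := by
    field_simp
  have e2 : (2 * ((r : ℝ) + b)) = (2 * r) * (1 + (b : ℝ) / r) := by
    field_simp
  have h2r : ((2 : ℝ) * r) ^ d ≠ 0 := by positivity
  simp only [Pi.div_apply]
  rw [e1, e2, mul_pow (2 * (r : ℝ)) (1 + (a : ℝ) / r),
    mul_pow (2 * (r : ℝ)) (1 + (b : ℝ) / r),
    show n * ((2 * (r : ℝ)) ^ d * (1 + (b : ℝ) / r) ^ d)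
      = (2 * (r : ℝ)) ^ d * (n * (1 + (b : ℝ) / r) ^ d) from by ring,
    mul_div_mul_left _ _ h2r]

/-- Eventually-1 bound on the density sequence. -/
lemma seq_le_one {d : ℕ} (A : Set (Fin d → ℤ)) (r : ℕ) (hr : 1 ≤ r) :
    (Nat.card ↥(A ∩ {x : Fin d → ℤ | ∀ i, -(r : ℤ) ≤ x i ∧ x i < (r : ℤ)}) : ℝ)
      / (2 * r) ^ d ≤ 1 := by
  classical
  rw [count_eq]
  have hle : ((boxF d r).filter (· ∈ A)).card ≤ (2 * r) ^ d := by
    rw [← card_boxF d r]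
    exact Finset.card_filter_le _ _
  have hpos : (0 : ℝ) < (2 * (r : ℝ)) ^ d := by
    have : (0 : ℝ) < (r : ℝ) := by exact_mod_cast hr
    positivity
  rw [div_le_one hpos]
  calc (((boxF d r).filter (· ∈ A)).card : ℝ) ≤ (((2 * r) ^ d : ℕ) : ℝ) := by
        exact_mod_cast hle
    _ = (2 * (r : ℝ)) ^ d := by push_cast; ring

lemma upperDensity_le {d : ℕ} (Q : Finset (Fin d → ℤ)) (hQ : Q.Nonempty) (M : ℕ)
    (hM : ∀ q ∈ Q, ∀ i, -(M : ℤ) ≤ q i ∧ q i ≤ M)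
    (A : Set (Fin d → ℤ))
    (hA : ∀ a ∈ A, ∀ b ∈ A, ∀ q ∈ Q, ∀ q' ∈ Q, q ≠ q' → a - b ≠ q - q') :
    upperDensity A ≤ 1 / (Q.card : ℝ) := by
  classical
  set n : ℝ := (Q.card : ℝ) with hn
  have hnpos : (0 : ℝ) < n := by
    simp only [hn]
    exact_mod_cast Finset.card_pos.mpr hQ
  set f : ℕ → ℝ := fun r : ℕ =>
    (Nat.card ↥(A ∩ {x : Fin d → ℤ | ∀ i, -(r : ℤ) ≤ x i ∧ x i < (r : ℤ)}) : ℝ)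
      / (2 * r) ^ d with hf
  have hf0 : ∀ r, 0 ≤ f r := by
    intro r
    apply div_nonneg (Nat.cast_nonneg _)
    positivity
  have hcob : IsCoboundedUnder (· ≤ ·) atTop f :=
    IsBoundedUnder.isCoboundedUnder_le
      (isBoundedUnder_of_eventually_ge (Eventually.of_forall hf0))
  have key : ∀ r : ℕ, 1 ≤ r → f r ≤ (2 * ((r : ℝ) + M)) ^ d / (n * (2 * (r : ℝ)) ^ d) := by
    intro r hr
    have hc := count_upper Q M hM A hA r
    have hcR : n * (Nat.card ↥(A ∩ {x : Fin d → ℤ | ∀ i, -(r : ℤ) ≤ x i ∧ x i < (r : ℤ)}) : ℝ)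
        ≤ (2 * ((r : ℝ) + M)) ^ d := by
      calc n * (Nat.card ↥(A ∩ {x : Fin d → ℤ | ∀ i, -(r : ℤ) ≤ x i ∧ x i < (r : ℤ)}) : ℝ)
          = ((Q.card * Nat.card ↥(A ∩ {x : Fin d → ℤ | ∀ i, -(r:ℤ) ≤ x i ∧ x i < (r:ℤ)}) : ℕ) : ℝ) := by
            push_cast [hn]; ring
        _ ≤ (((2 * (r + M)) ^ d : ℕ) : ℝ) := by exact_mod_cast hc
        _ = (2 * ((r : ℝ) + M)) ^ d := by push_cast; ring
    have hrp : (0 : ℝ) < (2 * (r : ℝ)) ^ d := by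
      have : (0 : ℝ) < (r : ℝ) := by exact_mod_cast hr
      positivity
    have hden : (0 : ℝ) < n * (2 * (r : ℝ)) ^ d := by positivity
    rw [hf, div_le_div_iff₀ hrp hden]
    calc (Nat.card ↥(A ∩ {x : Fin d → ℤ | ∀ i, -(r:ℤ) ≤ x i ∧ x i < (r:ℤ)}) : ℝ)
          * (n * (2 * (r : ℝ)) ^ d)
        = (n * (Nat.card ↥(A ∩ {x : Fin d → ℤ | ∀ i, -(r:ℤ) ≤ x i ∧ x i < (r:ℤ)}) : ℝ))
            * (2 * (r : ℝ)) ^ d := by ring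
      _ ≤ (2 * ((r : ℝ) + M)) ^ d * (2 * (r : ℝ)) ^ d :=
          mul_le_mul_of_nonneg_right hcR (le_of_lt hrp)
  have htend := tendAux d M 0 n hnpos
  simp only [Nat.cast_zero, add_zero] at htend
  refine le_of_forall_sub_le ?_
  intro ε hε
  rw [sub_le_iff_le_add]
  apply limsup_le_of_le hcob
  have hev : ∀ᶠ r : ℕ in atTop,
      (2 * ((r : ℝ) + M)) ^ d / (n * (2 * (r : ℝ)) ^ d) < 1 / n + ε :=
    htend.eventually_lt_const (by linarith)
  filter_upwards [hev, eventually_ge_atTop 1] with r h1 h2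
  exact le_of_lt (lt_of_le_of_lt (key r h2) h1)

lemma le_upperDensity {d : ℕ} (Q : Finset (Fin d → ℤ)) (hQ : Q.Nonempty) (M : ℕ)
    (hM : ∀ q ∈ Q, ∀ i, -(M : ℤ) ≤ q i ∧ q i ≤ M)
    (S : Set (Fin d → ℤ))
    (hS : ∀ x : Fin d → ℤ,
      ∃! p : (Fin d → ℤ) × (Fin d → ℤ), p.1 ∈ Q ∧ p.2 ∈ S ∧ x = p.1 + p.2) :
    1 / (Q.card : ℝ) ≤ upperDensity S := by
  classical
  set n : ℝ := (Q.card : ℝ) with hn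
  have hnpos : (0 : ℝ) < n := by
    simp only [hn]
    exact_mod_cast Finset.card_pos.mpr hQ
  set f : ℕ → ℝ := fun r : ℕ =>
    (Nat.card ↥(S ∩ {x : Fin d → ℤ | ∀ i, -(r : ℤ) ≤ x i ∧ x i < (r : ℤ)}) : ℝ)
      / (2 * r) ^ d with hf
  have hbd : IsBoundedUnder (· ≤ ·) atTop f := by
    apply isBoundedUnder_of_eventually_le (a := (1 : ℝ))
    filter_upwards [eventually_ge_atTop 1] with r hr
    exact seq_le_one S r hr
  -- key pointwise bound
  have key : ∀ r : ℕ, 1 ≤ r →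
      (2 * (r : ℝ)) ^ d / (n * (2 * ((r : ℝ) + M)) ^ d) ≤ f (r + M) := by
    intro r hr
    have hc := count_lower Q M hM S hS r
    have hcR : (2 * (r : ℝ)) ^ d ≤
        n * (Nat.card ↥(S ∩ {x : Fin d → ℤ | ∀ i, -((r + M : ℕ) : ℤ) ≤ x i ∧ x i < ((r + M : ℕ) : ℤ)}) : ℝ) := by
      calc (2 * (r : ℝ)) ^ d = (((2 * r) ^ d : ℕ) : ℝ) := by push_cast; ring
        _ ≤ ((Q.card * Nat.card ↥(S ∩ {x : Fin d → ℤ | ∀ i, -((r + M : ℕ) : ℤ) ≤ x i ∧ x i < ((r + M : ℕ) : ℤ)}) : ℕ) : ℝ) := by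
            exact_mod_cast hc
        _ = n * (Nat.card ↥(S ∩ {x : Fin d → ℤ | ∀ i, -((r + M : ℕ) : ℤ) ≤ x i ∧ x i < ((r + M : ℕ) : ℤ)}) : ℝ) := by
            push_cast [hn]; ring
    have hrp : (0 : ℝ) < (2 * ((r : ℝ) + M)) ^ d := by
      have : (0 : ℝ) < (r : ℝ) := by exact_mod_cast hr
      positivity
    have hden : (0 : ℝ) < n * (2 * ((r : ℝ) + M)) ^ d := by positivity
    have hfrM : f (r + M) =
        (Nat.card ↥(S ∩ {x : Fin d → ℤ | ∀ i, -((r + M : ℕ) : ℤ) ≤ x i ∧ x i < ((r + M : ℕ) : ℤ)}) : ℝ)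
          / (2 * ((r : ℝ) + M)) ^ d := by
      simp only [hf]
      push_cast
      ring_nf
    rw [hfrM, div_le_div_iff₀ hden hrp]
    calc (2 * (r : ℝ)) ^ d * (2 * ((r : ℝ) + M)) ^ d
        ≤ (n * (Nat.card ↥(S ∩ {x : Fin d → ℤ | ∀ i, -((r + M : ℕ) : ℤ) ≤ x i ∧ x i < ((r + M : ℕ) : ℤ)}) : ℝ))
            * (2 * ((r : ℝ) + M)) ^ d := mul_le_mul_of_nonneg_right hcR (le_of_lt hrp)
      _ = (Nat.card ↥(S ∩ {x : Fin d → ℤ | ∀ i, -((r + M : ℕ) : ℤ) ≤ x i ∧ x i < ((r + M : ℕ) : ℤ)}) : ℝ)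
            * (n * (2 * ((r : ℝ) + M)) ^ d) := by ring
  have htend := tendAux d 0 M n hnpos
  simp only [Nat.cast_zero, add_zero] at htend
  refine le_of_forall_sub_le ?_
  intro ε hε
  have hev : ∀ᶠ r : ℕ in atTop,
      1 / n - ε < (2 * (r : ℝ)) ^ d / (n * (2 * ((r : ℝ) + M)) ^ d) :=
    htend.eventually_const_lt (by linarith)
  have hev2 : ∀ᶠ r : ℕ in atTop, 1 / n - ε ≤ f (r + M) := by
    filter_upwards [hev, eventually_ge_atTop 1] with r h1 h2
    exact le_of_lt (lt_of_lt_of_le h1 (key r h2))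
  have hfreq : ∃ᶠ r : ℕ in atTop, 1 / n - ε ≤ f r := by
    rw [frequently_atTop]
    intro N
    obtain ⟨N', hN'⟩ := eventually_atTop.1 hev2
    exact ⟨max N N' + M, le_trans (le_max_left _ _) (Nat.le_add_right _ _),
      hN' (max N N') (le_max_right _ _)⟩
  exact le_limsup_of_frequently_le hfreq hbd

end Stmt17Aux

open Stmt17Aux in
theorem stmt_17 {d : ℕ} (Q : Finset (Fin d → ℤ)) (hQ : Q.Nonempty)
    (D : Set (Fin d → ℤ))
    (hD : D = {w | ∃ q ∈ Q, ∃ q' ∈ Q, q ≠ q' ∧ w = q - q'}) :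
    sSup {r : ℝ | ∃ A : Set (Fin d → ℤ),
        (∀ a ∈ A, ∀ b ∈ A, a - b ∉ D) ∧ r = upperDensity A} ≤ 1 / Q.card ∧
    ((∃ S : Set (Fin d → ℤ), ∀ x : Fin d → ℤ,
        ∃! p : (Fin d → ℤ) × (Fin d → ℤ), p.1 ∈ Q ∧ p.2 ∈ S ∧ x = p.1 + p.2) →
      sSup {r : ℝ | ∃ A : Set (Fin d → ℤ),
        (∀ a ∈ A, ∀ b ∈ A, a - b ∉ D) ∧ r = upperDensity A} = 1 / Q.card) := by
  classical
  obtain ⟨M, hM⟩ : ∃ M : ℕ, ∀ q ∈ Q, ∀ i, -(M : ℤ) ≤ q i ∧ q i ≤ M := by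
    refine ⟨Q.sup fun q => Finset.univ.sup fun i => (q i).natAbs, fun q hq i => ?_⟩
    have h1 : (q i).natAbs ≤ Q.sup fun q => Finset.univ.sup fun i => (q i).natAbs :=
      le_trans (Finset.le_sup (f := fun i => (q i).natAbs) (Finset.mem_univ i))
        (Finset.le_sup (f := fun q => Finset.univ.sup fun i => (q i).natAbs) hq)
    have h3 : |q i| ≤ ((Q.sup fun q => Finset.univ.sup fun i => (q i).natAbs : ℕ) : ℤ) := by
      rw [Int.abs_eq_natAbs]; exact_mod_cast h1
    exact abs_le.mp h3
  have hnpos : (0 : ℝ) < (Q.card : ℝ) := by exact_mod_cast Finset.card_pos.mpr hQ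
  have hub : ∀ x ∈ {r : ℝ | ∃ A : Set (Fin d → ℤ),
      (∀ a ∈ A, ∀ b ∈ A, a - b ∉ D) ∧ r = upperDensity A}, x ≤ 1 / (Q.card : ℝ) := by
    rintro x ⟨A, hAav, rfl⟩
    apply upperDensity_le Q hQ M hM A
    intro a ha b hb q hq q' hq' hne heq
    exact hAav a ha b hb (by rw [hD]; exact ⟨q, hq, q', hq', hne, heq⟩)
  constructor
  · exact Real.sSup_le hub (by positivity)
  · rintro ⟨S, hS⟩
    refine le_antisymm (Real.sSup_le hub (by positivity)) ?_
    have hSav : ∀ a ∈ S, ∀ b ∈ S, a - b ∉ D := by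
      intro a ha b hb hab
      rw [hD] at hab
      obtain ⟨q, hq, q', hq', hne, heq⟩ := hab
      have hx : q' + a = q + b := by
        have : a - b = q - q' := heq
        have h2 : a + q' = q + b := by
          rw [← sub_eq_sub_iff_add_eq_add]
          exact this
        rw [← h2]; abel
      have h1 : (q', a).1 ∈ Q ∧ (q', a).2 ∈ S ∧ q' + a = (q', a).1 + (q', a).2 :=
        ⟨hq', ha, rfl⟩
      have h2 : (q, b).1 ∈ Q ∧ (q, b).2 ∈ S ∧ q' + a = (q, b).1 + (q, b).2 :=
        ⟨hq, hb, hx⟩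
      have := ((hS (q' + a)).unique h1 h2)
      exact hne (congrArg Prod.fst this).symm
    have hmem : upperDensity S ∈ {r : ℝ | ∃ A : Set (Fin d → ℤ),
        (∀ a ∈ A, ∀ b ∈ A, a - b ∉ D) ∧ r = upperDensity A} := ⟨S, hSav, rfl⟩
    calc (1 : ℝ) / (Q.card : ℝ) ≤ upperDensity S := le_upperDensity Q hQ M hM S hS
      _ ≤ sSup _ := le_csSup ⟨1 / (Q.card : ℝ), hub⟩ hmem
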